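/- Let N be an R-module and U a family of invertible R-modules with sections. If the localization map N → N_U = R_U ⊗_R N is an isomorphism, then for every a ∈ ℕ·A the map N → L^a ⊗_R N given by multiplication by s^a is an isomorphism. -/

import Mathlib

open TensorProduct

/-- An `R`-module `M` is invertible if the natural contraction `M ⊗[R] M^* → R` is bijective
(equivalently, `M` is finitely generated projective of rank one). -/
def IsInvertibleModule (R M : Type) [CommRing R] [AddCommGroup M] [Module R M] : Prop :=
  Function.Bijective (contractRight (R := R) (M := M))

/-- An `R`-algebra `A` inverts a family of sections `s α` of modules `L α` if each map
`A → A ⊗[R] L α`, `x ↦ x ⊗ s α`, is bijective (i.e. each `1 ⊗ s α` is nowhere vanishing). -/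
def Inverts (R : Type) [CommRing R] {ι : Type} (L : ι → Type)
    [∀ α, AddCommGroup (L α)] [∀ α, Module R (L α)] (s : ∀ α, L α)
    (A : Type) [CommRing A] [Algebra R A] : Prop :=
  ∀ α, Function.Bijective fun x : A => (x ⊗ₜ[R] s α : A ⊗[R] L α)

/-- `Q` is a generalized fraction ring of `R` with respect to the family of sections
`s α ∈ L α` of invertible modules: `Q` inverts all the sections `s α`, and it is universal
among `R`-algebras doing so.  This is the universal property of the filtered colimit
`R_U = colim_{a ∈ ℕ·A} L^a` (Theorem 3.2 / Proposition 3.6 of the paper). -/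
structure IsGenFractionRing (R : Type) [CommRing R] {ι : Type} (L : ι → Type)
    [∀ α, AddCommGroup (L α)] [∀ α, Module R (L α)] (s : ∀ α, L α)
    (Q : Type) [CommRing Q] [Algebra R Q] : Prop where
  inverts : Inverts R L s Q
  universal : ∀ (A : Type) [CommRing A] [Algebra R A],
    Inverts R L s A → ∃! _ : Q →ₐ[R] A, True

open scoped TensorProduct in
/-- The tensor power `L^a = ⊗_α L_α^{⊗ a_α}` attached to a finitely supported family of
exponents `a : ι →₀ ℕ`. -/
def Lpow (R : Type) [CommRing R] {ι : Type} (L : ι → Type)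
    [∀ α, AddCommGroup (L α)] [∀ α, Module R (L α)] (a : ι →₀ ℕ) : Type :=
  ⨂[R] (p : Σ α : ι, Fin (a α)), L p.1

noncomputable instance (R : Type) [CommRing R] {ι : Type} (L : ι → Type)
    [∀ α, AddCommGroup (L α)] [∀ α, Module R (L α)] (a : ι →₀ ℕ) :
    AddCommGroup (Lpow R L a) := by unfold Lpow; infer_instance

noncomputable instance (R : Type) [CommRing R] {ι : Type} (L : ι → Type)
    [∀ α, AddCommGroup (L α)] [∀ α, Module R (L α)] (a : ι →₀ ℕ) :
    Module R (Lpow R L a) := by unfold Lpow; infer_instance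

/-- The element `s^a = ⊗_α s_α^{⊗ a_α} ∈ L^a`. -/
noncomputable def spow (R : Type) [CommRing R] {ι : Type} {L : ι → Type}
    [∀ α, AddCommGroup (L α)] [∀ α, Module R (L α)] (s : ∀ α, L α) (a : ι →₀ ℕ) :
    Lpow R L a :=
  PiTensorProduct.tprod R fun p => s p.1

namespace Stmt13Aux

open PiTensorProduct

variable (R : Type) [CommRing R]

section Cons

variable {n : ℕ} (M : Fin (n + 1) → Type) [∀ i, AddCommGroup (M i)] [∀ i, Module R (M i)]

/-- The "cons" map `M 0 ⊗ (⨂ i, M i.succ) → ⨂ i, M i`. -/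
noncomputable def consLin : (M 0) ⊗[R] (⨂[R] i : Fin n, M i.succ) →ₗ[R] ⨂[R] i, M i :=
  TensorProduct.lift
    ((PiTensorProduct.lift :
        MultilinearMap R (fun i : Fin n => M i.succ) (⨂[R] i, M i) ≃ₗ[R] _).toLinearMap
      ∘ₗ (PiTensorProduct.tprod R (s := M)).curryLeft)

@[simp] lemma consLin_tmul (x : M 0) (v : ∀ i : Fin n, M i.succ) :
    consLin R M (x ⊗ₜ[R] tprod R v) = tprod R (Fin.cons x v) := by
  simp [consLin]

/-- Auxiliary linear map for `unconsLin`. -/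
noncomputable def lAux :
    M 0 →ₗ[R] MultilinearMap R (fun i : Fin n => M i.succ)
      ((M 0) ⊗[R] (⨂[R] i : Fin n, M i.succ)) where
  toFun x := (TensorProduct.mk R (M 0) (⨂[R] i : Fin n, M i.succ) x).compMultilinearMap
    (PiTensorProduct.tprod R)
  map_add' x y := by
    ext v
    simp [TensorProduct.add_tmul]
  map_smul' c x := by
    ext v
    simp [TensorProduct.smul_tmul']

/-- The "uncons" map `⨂ i, M i → M 0 ⊗ (⨂ i, M i.succ)`. -/
noncomputable def unconsLin : (⨂[R] i, M i) →ₗ[R] (M 0) ⊗[R] (⨂[R] i : Fin n, M i.succ) :=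
  PiTensorProduct.lift (lAux R M).uncurryLeft

@[simp] lemma unconsLin_tprod (m : ∀ i, M i) :
    unconsLin R M (tprod R m) = m 0 ⊗ₜ[R] tprod R (Fin.tail m) := by
  simp [unconsLin, lAux]

/-- The equivalence `M 0 ⊗ (⨂ i : Fin n, M i.succ) ≃ ⨂ i : Fin (n+1), M i`. -/
noncomputable def consEquiv : (M 0) ⊗[R] (⨂[R] i : Fin n, M i.succ) ≃ₗ[R] ⨂[R] i, M i :=
  LinearEquiv.ofLinear (consLin R M) (unconsLin R M)
    (by
      apply PiTensorProduct.ext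
      ext m
      simp [Fin.cons_self_tail])
    (by
      apply TensorProduct.ext
      apply LinearMap.ext; intro x
      apply PiTensorProduct.ext
      ext v
      simp [Fin.tail_cons])

@[simp] lemma consEquiv_tmul (x : M 0) (v : ∀ i : Fin n, M i.succ) :
    consEquiv R M (x ⊗ₜ[R] tprod R v) = tprod R (Fin.cons x v) := by
  simp [consEquiv]

end Cons

/-- Main induction: if multiplication by each `m i` is bijective `P → M i ⊗ P`,
then so is multiplication by `⊗ᵢ m i`. -/
lemma gen (P : Type) [AddCommGroup P] [Module R P] :
    ∀ (n : ℕ) (M : Fin n → Type) (_ : ∀ i, AddCommGroup (M i)) (_ : ∀ i, Module R (M i))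
      (m : ∀ i, M i),
      (∀ i, Function.Bijective fun x : P => m i ⊗ₜ[R] x) →
      Function.Bijective fun x : P => (tprod R m) ⊗ₜ[R] x := by
  intro n
  induction n with
  | zero =>
    intro M _ _ m _
    have key : (fun x : P => (tprod R m : ⨂[R] i : Fin 0, M i) ⊗ₜ[R] x) =
        ⇑(LinearEquiv.rTensor P (isEmptyEquiv (Fin 0) (s := M)).symm) ∘
          ⇑(TensorProduct.lid R P).symm := by
      funext x
      have h1 : (isEmptyEquiv (Fin 0) (s := M)).symm 1 = tprod R m := by
        rw [show (1 : R) = isEmptyEquiv (Fin 0) (s := M) (tprod R m) from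
          (isEmptyEquiv_apply_tprod _ m).symm, LinearEquiv.symm_apply_apply]
      simp only [Function.comp_apply, TensorProduct.lid_symm_apply, LinearEquiv.rTensor,
        TensorProduct.congr_tmul, LinearEquiv.refl_apply, h1]
    rw [key]
    exact (LinearEquiv.rTensor P (isEmptyEquiv (Fin 0) (s := M)).symm).bijective.comp
      (TensorProduct.lid R P).symm.bijective
  | succ n ih =>
    intro M _ _ m h
    have b2 := ih (fun i => M i.succ) _ _ (fun i => m i.succ) (fun i => h i.succ)
    let f2 : P →ₗ[R] (⨂[R] i : Fin n, M i.succ) ⊗[R] P :=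
      (TensorProduct.mk R (⨂[R] i : Fin n, M i.succ) P) (tprod R fun i => m i.succ)
    let e2 : P ≃ₗ[R] (⨂[R] i : Fin n, M i.succ) ⊗[R] P := LinearEquiv.ofBijective f2 b2
    have key : (fun x : P => (tprod R m : ⨂[R] i, M i) ⊗ₜ[R] x) =
        ⇑(LinearEquiv.rTensor P (consEquiv R M)) ∘
          ⇑(TensorProduct.assoc R (M 0) (⨂[R] i : Fin n, M i.succ) P).symm ∘
            ⇑(LinearEquiv.lTensor (M 0) e2) ∘ (fun x : P => m 0 ⊗ₜ[R] x) := by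
      funext x
      have he2 : e2 (x) = (tprod R (fun i : Fin n => m i.succ)) ⊗ₜ[R] x := rfl
      simp only [Function.comp_apply, LinearEquiv.lTensor, TensorProduct.congr_tmul,
        LinearEquiv.refl_apply, he2, TensorProduct.assoc_symm_tmul, LinearEquiv.rTensor]
      rw [consEquiv_tmul]
      have hm0 : (Fin.cons (m 0) (fun i : Fin n => m i.succ) : ∀ i, M i) = m :=
        Fin.cons_self_tail m
      rw [hm0]
    rw [key]
    exact (LinearEquiv.rTensor P (consEquiv R M)).bijective.comp
      ((TensorProduct.assoc R (M 0) (⨂[R] i : Fin n, M i.succ) P).symm.bijective.comp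
        ((LinearEquiv.lTensor (M 0) e2).bijective.comp (h 0)))

/-- Version for an arbitrary finite index type. -/
lemma gen' (P : Type) [AddCommGroup P] [Module R P] (κ : Type) [Fintype κ]
    (M : κ → Type) [∀ k, AddCommGroup (M k)] [∀ k, Module R (M k)] (m : ∀ k, M k)
    (h : ∀ k, Function.Bijective fun x : P => m k ⊗ₜ[R] x) :
    Function.Bijective fun x : P => (tprod R m) ⊗ₜ[R] x := by
  let e : κ ≃ Fin (Fintype.card κ) := Fintype.equivFin κ
  have b := gen R P (Fintype.card κ) (fun i => M (e.symm i)) _ _ (fun i => m (e.symm i))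
    (fun i => h (e.symm i))
  have key : (fun x : P => (tprod R m : ⨂[R] k, M k) ⊗ₜ[R] x) =
      ⇑(LinearEquiv.rTensor P (PiTensorProduct.reindex R M e).symm) ∘
        (fun x : P => (tprod R fun i => m (e.symm i)) ⊗ₜ[R] x) := by
    funext x
    have h1 : (PiTensorProduct.reindex R M e).symm (tprod R fun i => m (e.symm i)) =
        tprod R m := by
      rw [← PiTensorProduct.reindex_tprod e m, LinearEquiv.symm_apply_apply]
    simp only [Function.comp_apply, LinearEquiv.rTensor, TensorProduct.congr_tmul,
      LinearEquiv.refl_apply, h1]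
  rw [key]
  exact (LinearEquiv.rTensor P (PiTensorProduct.reindex R M e).symm).bijective.comp b

end Stmt13Aux

/-- If the localization map `N → N_U = R_U ⊗_R N` is an isomorphism, then for every
`a ∈ ℕ·A` multiplication by `s^a` is an isomorphism `N → L^a ⊗_R N`. -/
theorem stmt_13 (R : Type) [CommRing R] {ι : Type} (L : ι → Type)
    [∀ α, AddCommGroup (L α)] [∀ α, Module R (L α)]
    (hL : ∀ α, IsInvertibleModule R (L α)) (s : ∀ α, L α)
    (Q : Type) [CommRing Q] [Algebra R Q] (hQ : IsGenFractionRing R L s Q)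
    (N : Type) [AddCommGroup N] [Module R N]
    (hN : Function.Bijective fun x : N => ((1 : Q) ⊗ₜ[R] x : Q ⊗[R] N)) :
    ∀ a : ι →₀ ℕ, Function.Bijective
      fun x : N => ((spow R s a) ⊗ₜ[R] x : Lpow R L a ⊗[R] N) := by
  intro a
  classical
  -- the index type is finite
  let eq0 : (Σ α : ι, Fin (a α)) ≃ (Σ α : (a.support : Finset ι), Fin (a α.1)) :=
    { toFun := fun p => ⟨⟨p.1, Finsupp.mem_support_iff.2 p.2.pos.ne'⟩, p.2⟩
      invFun := fun p => ⟨p.1.1, p.2⟩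
      left_inv := fun p => rfl
      right_inv := fun p => rfl }
  haveI : Fintype (Σ α : ι, Fin (a α)) := Fintype.ofEquiv _ eq0.symm
  -- multiplication by each `s α` is bijective on `P := Q ⊗ N`
  have hP : ∀ α, Function.Bijective fun x : Q ⊗[R] N => (s α) ⊗ₜ[R] x := by
    intro α
    let f : Q →ₗ[R] Q ⊗[R] L α := (TensorProduct.mk R Q (L α)).flip (s α)
    have hf : Function.Bijective f := hQ.inverts α
    let fe : Q ≃ₗ[R] Q ⊗[R] L α := LinearEquiv.ofBijective f hf
    let big : Q ⊗[R] N ≃ₗ[R] (L α) ⊗[R] (Q ⊗[R] N) :=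
      (LinearEquiv.rTensor N fe) ≪≫ₗ
        (LinearEquiv.rTensor N (TensorProduct.comm R Q (L α))) ≪≫ₗ
          TensorProduct.assoc R (L α) Q N
    have hm : TensorProduct.mk R (L α) (Q ⊗[R] N) (s α) = (big : Q ⊗[R] N →ₗ[R] _) := by
      apply TensorProduct.ext'
      intro q x
      have hfe : fe q = q ⊗ₜ[R] s α := rfl
      simp only [TensorProduct.mk_apply, big, LinearEquiv.coe_coe, LinearEquiv.trans_apply,
        LinearEquiv.rTensor, TensorProduct.congr_tmul, LinearEquiv.refl_apply, hfe,
        TensorProduct.comm_tmul, TensorProduct.assoc_tmul]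
    have : (fun x : Q ⊗[R] N => (s α) ⊗ₜ[R] x) = ⇑big :=
      congrArg (fun g : Q ⊗[R] N →ₗ[R] (L α) ⊗[R] (Q ⊗[R] N) => ⇑g) hm
    rw [this]
    exact big.bijective
  -- the general lemma applied to `P = Q ⊗ N`
  have bP := Stmt13Aux.gen' R (Q ⊗[R] N) (Σ α : ι, Fin (a α)) (fun p => L p.1)
    (fun p => s p.1) (fun p => hP p.1)
  -- transfer back to `N` along `N ≃ Q ⊗ N`
  let eN : N →ₗ[R] Q ⊗[R] N := (TensorProduct.mk R Q N) 1
  have heN : Function.Bijective eN := hN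
  let e : N ≃ₗ[R] Q ⊗[R] N := LinearEquiv.ofBijective eN heN
  show Function.Bijective fun x : N =>
    ((PiTensorProduct.tprod R fun p : Σ α : ι, Fin (a α) => s p.1) ⊗ₜ[R] x :
      (⨂[R] p : Σ α : ι, Fin (a α), L p.1) ⊗[R] N)
  have key : (fun x : N =>
      ((PiTensorProduct.tprod R fun p : Σ α : ι, Fin (a α) => s p.1) ⊗ₜ[R] x :
        (⨂[R] p : Σ α : ι, Fin (a α), L p.1) ⊗[R] N)) =
      ⇑(LinearEquiv.lTensor (⨂[R] p : Σ α : ι, Fin (a α), L p.1) e).symm ∘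
        (fun y : Q ⊗[R] N =>
          (PiTensorProduct.tprod R fun p : Σ α : ι, Fin (a α) => s p.1) ⊗ₜ[R] y) ∘ ⇑e := by
    funext x
    simp only [Function.comp_apply]
    rw [LinearEquiv.eq_symm_apply]
    simp only [LinearEquiv.lTensor, TensorProduct.congr_tmul, LinearEquiv.refl_apply]
  rw [key]
  exact (LinearEquiv.lTensor (⨂[R] p : Σ α : ι, Fin (a α), L p.1) e).symm.bijective.comp
    (bP.comp e.bijective)
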